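/- arXiv:2305.12370 — 2 statements merged into one kernel-verified Lean document; each statement's English description precedes it below -/
import Mathlib

section
/- On T*ℝ⁴, with M₁ = J₁₂ + J₃₄ and M₂ = J₁₂ + J₁₃ + J₂₄, one has {M₁, M₂} = 0, and the function V₂(q) = q₁² - 4q₁q₄ + q₂² + 4q₂q₃ - q₃² - q₄² Poisson-commutes with both M₁ and M₂. -/
noncomputable def pb {n : ℕ} (f g : (Fin n → ℝ) × (Fin n → ℝ) → ℝ)
    (x : (Fin n → ℝ) × (Fin n → ℝ)) : ℝ :=
  ∑ i : Fin n,
    (fderiv ℝ f x (Pi.single i 1, 0) * fderiv ℝ g x (0, Pi.single i 1)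
      - fderiv ℝ f x (0, Pi.single i 1) * fderiv ℝ g x (Pi.single i 1, 0))

noncomputable def J (i j : Fin 4) : (Fin 4 → ℝ) × (Fin 4 → ℝ) → ℝ :=
  fun x => x.1 i * x.2 j - x.1 j * x.2 i

noncomputable def M1 : (Fin 4 → ℝ) × (Fin 4 → ℝ) → ℝ := fun x => J 0 1 x + J 2 3 x
noncomputable def M2 : (Fin 4 → ℝ) × (Fin 4 → ℝ) → ℝ := fun x => J 0 1 x + J 0 2 x + J 1 3 x
noncomputable def V2 : (Fin 4 → ℝ) × (Fin 4 → ℝ) → ℝ :=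
  fun x => (x.1 0)^2 - 4 * x.1 0 * x.1 3 + (x.1 1)^2 + 4 * x.1 1 * x.1 2
    - (x.1 2)^2 - (x.1 3)^2

section helpers

abbrev EE := (Fin 4 → ℝ) × (Fin 4 → ℝ)

lemma hq (i : Fin 4) (x : EE) :
    HasFDerivAt (fun x : EE => x.1 i)
      (((ContinuousLinearMap.proj i : (Fin 4 → ℝ) →L[ℝ] ℝ)).comp
        (ContinuousLinearMap.fst ℝ (Fin 4 → ℝ) (Fin 4 → ℝ))) x :=
  (((ContinuousLinearMap.proj i : (Fin 4 → ℝ) →L[ℝ] ℝ)).comp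
        (ContinuousLinearMap.fst ℝ (Fin 4 → ℝ) (Fin 4 → ℝ))).hasFDerivAt

lemma hp (i : Fin 4) (x : EE) :
    HasFDerivAt (fun x : EE => x.2 i)
      (((ContinuousLinearMap.proj i : (Fin 4 → ℝ) →L[ℝ] ℝ)).comp
        (ContinuousLinearMap.snd ℝ (Fin 4 → ℝ) (Fin 4 → ℝ))) x :=
  (((ContinuousLinearMap.proj i : (Fin 4 → ℝ) →L[ℝ] ℝ)).comp
        (ContinuousLinearMap.snd ℝ (Fin 4 → ℝ) (Fin 4 → ℝ))).hasFDerivAt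

lemma dq (i : Fin 4) : Differentiable ℝ (fun x : EE => x.1 i) :=
  fun x => (hq i x).differentiableAt
lemma dp (i : Fin 4) : Differentiable ℝ (fun x : EE => x.2 i) :=
  fun x => (hp i x).differentiableAt

lemma fdq (i : Fin 4) (x v : EE) :
    fderiv ℝ (fun x : EE => x.1 i) x v = v.1 i := by
  rw [(hq i x).fderiv]; rfl

lemma fdp (i : Fin 4) (x v : EE) :
    fderiv ℝ (fun x : EE => x.2 i) x v = v.2 i := by
  rw [(hp i x).fderiv]; rfl

lemma fdJ (i j : Fin 4) (x v : EE) :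
    fderiv ℝ (J i j) x v
      = v.1 i * x.2 j + x.1 i * v.2 j - (v.1 j * x.2 i + x.1 j * v.2 i) := by
  have hJ : J i j = fun x : EE => x.1 i * x.2 j - x.1 j * x.2 i := rfl
  rw [hJ, fderiv_fun_sub (((dq i).fun_mul (dp j)) x) (((dq j).fun_mul (dp i)) x)]
  rw [ContinuousLinearMap.sub_apply,
    fderiv_fun_mul ((dq i) x) ((dp j) x), fderiv_fun_mul ((dq j) x) ((dp i) x)]
  simp only [ContinuousLinearMap.add_apply, ContinuousLinearMap.smul_apply, smul_eq_mul,
    fdq, fdp]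
  ring

lemma dJ (i j : Fin 4) : Differentiable ℝ (J i j) :=
  ((dq i).mul (dp j)).sub ((dq j).mul (dp i))

lemma fdM1 (x v : EE) :
    fderiv ℝ M1 x v = fderiv ℝ (J 0 1) x v + fderiv ℝ (J 2 3) x v := by
  have : M1 = fun x => J 0 1 x + J 2 3 x := rfl
  rw [this, fderiv_fun_add ((dJ 0 1) x) ((dJ 2 3) x)]; rfl

lemma fdM2 (x v : EE) :
    fderiv ℝ M2 x v
      = fderiv ℝ (J 0 1) x v + fderiv ℝ (J 0 2) x v + fderiv ℝ (J 1 3) x v := by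
  have : M2 = fun x => (J 0 1 x + J 0 2 x) + J 1 3 x := rfl
  rw [this, fderiv_fun_add (((dJ 0 1).fun_add (dJ 0 2)) x) ((dJ 1 3) x),
    ContinuousLinearMap.add_apply, fderiv_fun_add ((dJ 0 1) x) ((dJ 0 2) x)]; rfl

lemma fdV2 (x v : EE) :
    fderiv ℝ V2 x v
      = 2 * x.1 0 * v.1 0 - 4 * (v.1 0 * x.1 3 + x.1 0 * v.1 3)
        + 2 * x.1 1 * v.1 1 + 4 * (v.1 1 * x.1 2 + x.1 1 * v.1 2)
        - 2 * x.1 2 * v.1 2 - 2 * x.1 3 * v.1 3 := by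
  have hV : V2 = fun x : EE => (x.1 0)^2 - 4 * x.1 0 * x.1 3 + (x.1 1)^2
      + 4 * x.1 1 * x.1 2 - (x.1 2)^2 - (x.1 3)^2 := rfl
  have d0 := dq (0 : Fin 4); have d1 := dq (1 : Fin 4)
  have d2 := dq (2 : Fin 4); have d3 := dq (3 : Fin 4)
  have h1 : Differentiable ℝ (fun x : EE => (x.1 0)^2) := d0.pow 2
  have h2 : Differentiable ℝ (fun x : EE => 4 * x.1 0 * x.1 3) :=
    ((differentiable_const 4).mul d0).mul d3
  have h3 : Differentiable ℝ (fun x : EE => (x.1 1)^2) := d1.pow 2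
  have h4 : Differentiable ℝ (fun x : EE => 4 * x.1 1 * x.1 2) :=
    ((differentiable_const 4).mul d1).mul d2
  have h5 : Differentiable ℝ (fun x : EE => (x.1 2)^2) := d2.pow 2
  have h6 : Differentiable ℝ (fun x : EE => (x.1 3)^2) := d3.pow 2
  rw [hV]
  rw [fderiv_fun_sub (((((h1.fun_sub h2).fun_add h3).fun_add h4).fun_sub h5) x) (h6 x),
    ContinuousLinearMap.sub_apply,
    fderiv_fun_sub ((((h1.fun_sub h2).fun_add h3).fun_add h4) x) (h5 x),
    ContinuousLinearMap.sub_apply,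
    fderiv_fun_add (((h1.fun_sub h2).fun_add h3) x) (h4 x), ContinuousLinearMap.add_apply,
    fderiv_fun_add ((h1.fun_sub h2) x) (h3 x), ContinuousLinearMap.add_apply,
    fderiv_fun_sub (h1 x) (h2 x), ContinuousLinearMap.sub_apply]
  have hs : ∀ i : Fin 4, fderiv ℝ (fun x : EE => (x.1 i)^2) x v = 2 * x.1 i * v.1 i := by
    intro i
    rw [show (fun x : EE => (x.1 i)^2) = fun x : EE => x.1 i * x.1 i from by
      funext y; ring, fderiv_fun_mul (dq i x) (dq i x)]
    simp only [ContinuousLinearMap.add_apply, ContinuousLinearMap.smul_apply, smul_eq_mul, fdq]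
    ring
  rw [hs 0, hs 1, hs 2, hs 3]
  rw [fderiv_fun_mul (((differentiable_const (4:ℝ)).fun_mul d0) x) (d3 x),
    fderiv_fun_mul (((differentiable_const (4:ℝ)).fun_mul d1) x) (d2 x),
    fderiv_fun_mul ((differentiable_const (4:ℝ)) x) (d0 x),
    fderiv_fun_mul ((differentiable_const (4:ℝ)) x) (d1 x)]
  simp only [ContinuousLinearMap.add_apply, ContinuousLinearMap.smul_apply, smul_eq_mul,
    fderiv_const, fderiv_fun_const, Pi.zero_apply, ContinuousLinearMap.zero_apply, fdq]
  ring

end helpers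

theorem triple_rotation :
    (∀ x, pb M1 M2 x = 0) ∧ (∀ x, pb V2 M1 x = 0) ∧ (∀ x, pb V2 M2 x = 0) := by
  refine ⟨fun x => ?_, fun x => ?_, fun x => ?_⟩ <;>
  · simp only [pb, Fin.sum_univ_four, fdM1, fdM2, fdV2, fdJ]
    simp only [Pi.single_eq_same, Pi.single_eq_of_ne (by decide : (1:Fin 4) ≠ 0),
      Pi.single_eq_of_ne (by decide : (0:Fin 4) ≠ 1),
      Pi.single_eq_of_ne (by decide : (2:Fin 4) ≠ 0),
      Pi.single_eq_of_ne (by decide : (0:Fin 4) ≠ 2),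
      Pi.single_eq_of_ne (by decide : (3:Fin 4) ≠ 0),
      Pi.single_eq_of_ne (by decide : (0:Fin 4) ≠ 3),
      Pi.single_eq_of_ne (by decide : (2:Fin 4) ≠ 1),
      Pi.single_eq_of_ne (by decide : (1:Fin 4) ≠ 2),
      Pi.single_eq_of_ne (by decide : (3:Fin 4) ≠ 1),
      Pi.single_eq_of_ne (by decide : (1:Fin 4) ≠ 3),
      Pi.single_eq_of_ne (by decide : (3:Fin 4) ≠ 2),
      Pi.single_eq_of_ne (by decide : (2:Fin 4) ≠ 3),
      Pi.zero_apply]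
    ring
end

section
/- For arbitrary differentiable functions f₁, f₂ : ℝ → ℝ, the functions H = P₁ + f₁(Q₁+Q₂) + f₂(Q₁-Q₂) and G = P₂ + f₁(Q₁+Q₂) - f₂(Q₁-Q₂) on T*ℝ³ Poisson-commute, where Q₁ = q₁²+q₂²+q₃², Q₂ = q₁²+q₂²-q₃², P₁ = p₁²+p₂²+p₃², P₂ = p₁²+p₂²-p₃². -/
noncomputable def Q1 : (Fin 3 → ℝ) × (Fin 3 → ℝ) → ℝ :=
  fun x => (x.1 0)^2 + (x.1 1)^2 + (x.1 2)^2
noncomputable def Q2 : (Fin 3 → ℝ) × (Fin 3 → ℝ) → ℝ :=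
  fun x => (x.1 0)^2 + (x.1 1)^2 - (x.1 2)^2
noncomputable def P1 : (Fin 3 → ℝ) × (Fin 3 → ℝ) → ℝ :=
  fun x => (x.2 0)^2 + (x.2 1)^2 + (x.2 2)^2
noncomputable def P2 : (Fin 3 → ℝ) × (Fin 3 → ℝ) → ℝ :=
  fun x => (x.2 0)^2 + (x.2 1)^2 - (x.2 2)^2

open ContinuousLinearMap in
theorem separable_commute (f1 f2 : ℝ → ℝ) (hf1 : Differentiable ℝ f1)
    (hf2 : Differentiable ℝ f2) :
    ∀ x, pb (fun x => P1 x + f1 (Q1 x + Q2 x) + f2 (Q1 x - Q2 x))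
            (fun x => P2 x + f1 (Q1 x + Q2 x) - f2 (Q1 x - Q2 x)) x = 0 := by
  intro x

  have hq : ∀ i : Fin 3, HasFDerivAt (fun y : (Fin 3 → ℝ) × (Fin 3 → ℝ) => y.1 i)
      ((proj i).comp (fst ℝ (Fin 3 → ℝ) (Fin 3 → ℝ))) x :=
    fun i => ((proj i).comp (fst ℝ (Fin 3 → ℝ) (Fin 3 → ℝ))).hasFDerivAt
  have hp : ∀ i : Fin 3, HasFDerivAt (fun y : (Fin 3 → ℝ) × (Fin 3 → ℝ) => y.2 i)
      ((proj i).comp (snd ℝ (Fin 3 → ℝ) (Fin 3 → ℝ))) x :=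
    fun i => ((proj i).comp (snd ℝ (Fin 3 → ℝ) (Fin 3 → ℝ))).hasFDerivAt
  have hsq : ∀ i : Fin 3, HasFDerivAt (fun y : (Fin 3 → ℝ) × (Fin 3 → ℝ) => (y.1 i)^2)
      (x.1 i • ((proj i).comp (fst ℝ (Fin 3 → ℝ) (Fin 3 → ℝ)))
        + x.1 i • ((proj i).comp (fst ℝ (Fin 3 → ℝ) (Fin 3 → ℝ)))) x := fun i => by
    simpa [pow_two, Pi.mul_def] using (hq i).mul (hq i)
  have hpsq : ∀ i : Fin 3, HasFDerivAt (fun y : (Fin 3 → ℝ) × (Fin 3 → ℝ) => (y.2 i)^2)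
      (x.2 i • ((proj i).comp (snd ℝ (Fin 3 → ℝ) (Fin 3 → ℝ)))
        + x.2 i • ((proj i).comp (snd ℝ (Fin 3 → ℝ) (Fin 3 → ℝ)))) x := fun i => by
    simpa [pow_two, Pi.mul_def] using (hp i).mul (hp i)
  have hQ1 : HasFDerivAt Q1 _ x := ((hsq 0).add (hsq 1)).add (hsq 2)
  have hQ2 : HasFDerivAt Q2 _ x := ((hsq 0).add (hsq 1)).sub (hsq 2)
  have hP1 : HasFDerivAt P1 _ x := ((hpsq 0).add (hpsq 1)).add (hpsq 2)
  have hP2 : HasFDerivAt P2 _ x := ((hpsq 0).add (hpsq 1)).sub (hpsq 2)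
  have hU : HasFDerivAt (fun y => Q1 y + Q2 y) _ x := hQ1.add hQ2
  have hV : HasFDerivAt (fun y => Q1 y - Q2 y) _ x := hQ1.sub hQ2
  have hfU : HasFDerivAt (fun y => f1 (Q1 y + Q2 y)) _ x :=
    ((hf1 _).hasDerivAt).comp_hasFDerivAt x hU
  have hfV : HasFDerivAt (fun y => f2 (Q1 y - Q2 y)) _ x :=
    ((hf2 _).hasDerivAt).comp_hasFDerivAt x hV
  have hH : HasFDerivAt (fun y => P1 y + f1 (Q1 y + Q2 y) + f2 (Q1 y - Q2 y)) _ x :=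
    (hP1.add hfU).add hfV
  have hG : HasFDerivAt (fun y => P2 y + f1 (Q1 y + Q2 y) - f2 (Q1 y - Q2 y)) _ x :=
    (hP2.add hfU).sub hfV
  simp only [pb, hH.fderiv, hG.fderiv, Fin.sum_univ_three,
    ContinuousLinearMap.add_apply, ContinuousLinearMap.sub_apply,
    ContinuousLinearMap.smul_apply, ContinuousLinearMap.comp_apply,
    ContinuousLinearMap.proj_apply, ContinuousLinearMap.coe_fst',
    ContinuousLinearMap.coe_snd', Pi.single_eq_same, smul_eq_mul]
  norm_num [Pi.single_apply, Fin.ext_iff]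
  ring
end
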